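/- Let M_1 be the Schubert matroid on [6] of rank 3 whose bases are the sets {a,b,c} with a < b < c, a ≤ 2, b ≤ 4, c ≤ 6, and let σ be the permutation 345612 acting on [6] (so σ(1)=3, σ(2)=4, σ(3)=5, σ(4)=6, σ(5)=1, σ(6)=2). Set M_2 = σM_1 and M_3 = σ²M_1. Then {Q(M_1), Q(M_2), Q(M_3)} is a subdivision of the hypersimplex Q(U_{3,6}): their union is Q(U_{3,6}) and pairwise intersections are proper faces of each. -/

import Mathlib

open Finset
open scoped Pointwise

/-- The indicator vector `e_B ∈ ℝⁿ` of a subset `B ⊆ [n]`. -/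
def indVec (n : ℕ) (B : Finset (Fin n)) : Fin n → ℝ := fun i => if i ∈ B then 1 else 0

/-- A collection of subsets of `[n]` is the collection of bases of a matroid
(possibly the empty matroid) iff it satisfies the basis exchange axiom. -/
def IsBases {n : ℕ} (𝓑 : Finset (Finset (Fin n))) : Prop :=
  ∀ B₁ ∈ 𝓑, ∀ B₂ ∈ 𝓑, ∀ b₁ ∈ B₁ \ B₂, ∃ b₂ ∈ B₂ \ B₁, insert b₂ (B₁.erase b₁) ∈ 𝓑

/-- The matroid (basis) polytope: convex hull of indicator vectors of the bases. -/
def polytope {n : ℕ} (𝓑 : Finset (Finset (Fin n))) : Set (Fin n → ℝ) :=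
  convexHull ℝ (indVec n '' ↑𝓑)

/-- A subdivision of a polytope `P` into polytopes `Ps i`: their union is `P`,
their vertices are vertices of `P`, and each pairwise intersection is a proper
(exposed) face of both pieces. -/
def IsSubdivision {n m : ℕ} (P : Set (Fin n → ℝ)) (Ps : Fin m → Set (Fin n → ℝ)) : Prop :=
  (⋃ i, Ps i) = P ∧
  (∀ i, Set.extremePoints ℝ (Ps i) ⊆ Set.extremePoints ℝ P) ∧
  ∀ i j, i ≠ j →
    IsExposed ℝ (Ps i) (Ps i ∩ Ps j) ∧ IsExposed ℝ (Ps j) (Ps i ∩ Ps j) ∧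
    Ps i ∩ Ps j ≠ Ps i ∧ Ps i ∩ Ps j ≠ Ps j

/-- A matroid subdivision of the matroid `𝓑` into the matroids `𝓜 i`. -/
def IsMatroidSubdivision {n m : ℕ} (𝓑 : Finset (Finset (Fin n)))
    (𝓜 : Fin m → Finset (Finset (Fin n))) : Prop :=
  IsBases 𝓑 ∧ (∀ i, IsBases (𝓜 i)) ∧ IsSubdivision (polytope 𝓑) fun i => polytope (𝓜 i)

open Classical in
/-- For `A ⊆ [m]`, the matroid `M_A` whose polytope is `⋂_{a ∈ A} Q(M_a)`:
its bases are the bases of `M` whose indicator vector lies in every `Q(M_a)`, `a ∈ A`.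
For `A = ∅` this is `M` itself. -/
noncomputable def interMatroid {n m : ℕ} (𝓑 : Finset (Finset (Fin n)))
    (𝓜 : Fin m → Finset (Finset (Fin n))) (A : Finset (Fin m)) : Finset (Finset (Fin n)) :=
  𝓑.filter fun B => ∀ a ∈ A, indVec n B ∈ polytope (𝓜 a)

/-- `f` is a valuation under matroid subdivisions:
`∑_{A ⊆ [m]} (-1)^{|A|} f(M_A) = 0` for every matroid subdivision. -/
def IsValuation {n : ℕ} {G : Type*} [AddCommGroup G] (f : Finset (Finset (Fin n)) → G) : Prop :=
  ∀ (m : ℕ) (𝓑 : Finset (Finset (Fin n))) (𝓜 : Fin m → Finset (Finset (Fin n))),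
    IsMatroidSubdivision 𝓑 𝓜 →
    ∑ A : Finset (Fin m), (-1 : ℤ) ^ A.card • f (interMatroid 𝓑 𝓜 A) = 0

open Classical in
/-- The Schubert matroid `SM₆(2,4,6)` on `[6]` (0-indexed: bases `{a,b,c}` with
`a < b < c`, `a ≤ 1`, `b ≤ 3`). -/
noncomputable def SchM1 : Finset (Finset (Fin 6)) :=
  (Finset.powersetCard 3 Finset.univ).filter fun B =>
    ∃ a b c : Fin 6, a < b ∧ b < c ∧ B = {a, b, c} ∧ (a : ℕ) ≤ 1 ∧ (b : ℕ) ≤ 3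

/-- The permutation `345612` of `[6]`, i.e. `i ↦ i + 2 (mod 6)` in `0`-indexed form. -/
def sigma6 : Fin 6 → Fin 6 := fun i => i + 2

noncomputable def SchM2 : Finset (Finset (Fin 6)) := SchM1.image fun B => B.image sigma6

noncomputable def SchM3 : Finset (Finset (Fin 6)) := SchM2.image fun B => B.image sigma6

namespace Sub36

def pr : Fin 3 → Finset (Fin 6) := ![{0,1},{2,3},{4,5}]
def partner : Fin 6 → Fin 6 := ![1,0,3,2,5,4]
def blk : Fin 6 → Fin 3 := ![0,0,1,1,2,2]

def Sb (b : Fin 3) (x : Fin 6 → ℝ) : ℝ := ∑ i ∈ pr b, x i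

def K (lo hi : Finset (Fin 3)) : Set (Fin 6 → ℝ) :=
  {x | (∀ i, 0 ≤ x i ∧ x i ≤ 1) ∧ (∑ i, x i) = 3 ∧
    (∀ b ∈ lo, 1 ≤ Sb b x) ∧ (∀ b ∈ hi, Sb b x ≤ 1)}

def Verts (lo hi : Finset (Fin 3)) : Finset (Finset (Fin 6)) :=
  (Finset.powersetCard 3 Finset.univ).filter
    (fun B => (∀ b ∈ lo, 1 ≤ (pr b ∩ B).card) ∧ (∀ b ∈ hi, (pr b ∩ B).card ≤ 1))

lemma Sb0_eq (x : Fin 6 → ℝ) : Sb 0 x = x 0 + x 1 := by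
  simp [Sb, pr, Finset.sum_pair (show (0:Fin 6) ≠ 1 by decide)]

lemma Sb1_eq (x : Fin 6 → ℝ) : Sb 1 x = x 2 + x 3 := by
  simp [Sb, pr, Finset.sum_pair (show (2:Fin 6) ≠ 3 by decide)]

lemma Sb2_eq (x : Fin 6 → ℝ) : Sb 2 x = x 4 + x 5 := by
  simp [Sb, pr, Finset.sum_pair (show (4:Fin 6) ≠ 5 by decide)]

lemma sum_sb (x : Fin 6 → ℝ) : ∑ i, x i = Sb 0 x + Sb 1 x + Sb 2 x := by
  rw [Sb0_eq, Sb1_eq, Sb2_eq, Fin.sum_univ_six]; ring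

lemma sum_indVec (B : Finset (Fin 6)) : ∑ i, indVec 6 B i = B.card := by
  simp only [indVec]
  rw [Finset.sum_ite_mem, Finset.univ_inter, Finset.sum_const, nsmul_eq_mul, mul_one]

lemma Sb_indVec (b : Fin 3) (B : Finset (Fin 6)) :
    Sb b (indVec 6 B) = ((pr b ∩ B).card : ℝ) := by
  simp only [Sb, indVec]
  rw [Finset.sum_ite_mem, Finset.sum_const, nsmul_eq_mul, mul_one]

lemma indVec_mem_K_iff (lo hi : Finset (Fin 3)) (B : Finset (Fin 6)) :
    indVec 6 B ∈ K lo hi ↔ B ∈ Verts lo hi := by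
  simp only [K, Set.mem_setOf_eq, Verts, Finset.mem_filter, Finset.mem_powersetCard]
  constructor
  · rintro ⟨-, h3, hlo, hhi⟩
    refine ⟨⟨Finset.subset_univ _, ?_⟩, fun b hb => ?_, fun b hb => ?_⟩
    · have := (sum_indVec B) ▸ h3; exact_mod_cast this
    · have := hlo b hb; rw [Sb_indVec] at this; exact_mod_cast this
    · have := hhi b hb; rw [Sb_indVec] at this; exact_mod_cast this
  · rintro ⟨⟨-, h3⟩, hlo, hhi⟩
    refine ⟨fun i => ?_, ?_, fun b hb => ?_, fun b hb => ?_⟩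
    · unfold indVec; split <;> norm_num
    · rw [sum_indVec, h3]; norm_num
    · rw [Sb_indVec]; exact_mod_cast hlo b hb
    · rw [Sb_indVec]; exact_mod_cast hhi b hb

lemma convex_K (lo hi : Finset (Fin 3)) : Convex ℝ (K lo hi) := by
  intro x hx y hy a b ha hb hab
  have hSb : ∀ c : Fin 3, Sb c (a • x + b • y) = a * Sb c x + b * Sb c y := by
    intro c
    simp only [Sb, Pi.add_apply, Pi.smul_apply, smul_eq_mul, Finset.sum_add_distrib,
      Finset.mul_sum]
  refine ⟨fun i => ?_, ?_, fun c hc => ?_, fun c hc => ?_⟩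
  · have h1 := (hx.1 i); have h2 := (hy.1 i)
    constructor
    · have := add_nonneg (mul_nonneg ha h1.1) (mul_nonneg hb h2.1)
      simpa using this
    · have : a * x i + b * y i ≤ a * 1 + b * 1 :=
        add_le_add (mul_le_mul_of_nonneg_left h1.2 ha) (mul_le_mul_of_nonneg_left h2.2 hb)
      simpa [hab] using this.trans_eq (by linarith)
  · simp only [Pi.add_apply, Pi.smul_apply, smul_eq_mul, Finset.sum_add_distrib,
      ← Finset.mul_sum, hx.2.1, hy.2.1]
    linarith
  · rw [hSb]
    have h1 := hx.2.2.1 c hc; have h2 := hy.2.2.1 c hc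
    nlinarith
  · rw [hSb]
    have h1 := hx.2.2.2 c hc; have h2 := hy.2.2.2 c hc
    nlinarith


-- combinatorial facts
lemma mem_pr : ∀ (l : Fin 6) (b : Fin 3), l ∈ pr b ↔ blk l = b := by decide
lemma partner_facts : ∀ i : Fin 6, partner i ≠ i ∧ blk (partner i) = blk i ∧
    pr (blk i) = {i, partner i} := by decide
lemma blk_ne_of : ∀ i j : Fin 6, j ≠ i → j ≠ partner i → blk j ≠ blk i := by decide
lemma same_blk_partner : ∀ i j : Fin 6, i ≠ j → blk i = blk j → j = partner i := by decide

/-- move `x i` to `u` and `x j` to `v`. -/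
def move (x : Fin 6 → ℝ) (i j : Fin 6) (u v : ℝ) : Fin 6 → ℝ :=
  fun l => x l + (if l = i then u - x l else 0) + (if l = j then v - x l else 0)

lemma move_apply_i (x : Fin 6 → ℝ) {i j : Fin 6} (hij : i ≠ j) (u v : ℝ) :
    move x i j u v i = u := by simp [move, hij]

lemma move_apply_j (x : Fin 6 → ℝ) {i j : Fin 6} (hij : i ≠ j) (u v : ℝ) :
    move x i j u v j = v := by simp [move, hij.symm]

lemma move_apply_other (x : Fin 6 → ℝ) {i j l : Fin 6} (hl : l ≠ i) (hl' : l ≠ j) (u v : ℝ) :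
    move x i j u v l = x l := by simp [move, hl, hl']

lemma move_sum (x : Fin 6 → ℝ) {i j : Fin 6} (hij : i ≠ j) (u v : ℝ) :
    ∑ l, move x i j u v l = (∑ l, x l) + (u - x i) + (v - x j) := by
  simp only [move, Finset.sum_add_distrib]
  rw [Finset.sum_ite_eq' Finset.univ i (fun l => u - x l),
    Finset.sum_ite_eq' Finset.univ j (fun l => v - x l)]
  simp

lemma move_Sb (x : Fin 6 → ℝ) {i j : Fin 6} (hij : i ≠ j) (u v : ℝ) (b : Fin 3) :
    Sb b (move x i j u v) = Sb b x + (if i ∈ pr b then u - x i else 0)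
      + (if j ∈ pr b then v - x j else 0) := by
  simp only [Sb, move, Finset.sum_add_distrib]
  rw [Finset.sum_ite_eq' (pr b) i (fun l => u - x l),
    Finset.sum_ite_eq' (pr b) j (fun l => v - x l)]

lemma move_mem (lo hi : Finset (Fin 3)) (x : Fin 6 → ℝ) (hx : x ∈ K lo hi)
    (i j : Fin 6) (hij : i ≠ j)
    (hcase : blk i = blk j ∨
      ((x (partner i) = 0 ∨ x (partner i) = 1) ∧ (x (partner j) = 0 ∨ x (partner j) = 1) ∧
        0 < x i ∧ x i < 1 ∧ 0 < x j ∧ x j < 1))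
    (t : ℝ) (h1 : 0 ≤ x i + t) (h2 : x i + t ≤ 1) (h3 : 0 ≤ x j - t) (h4 : x j - t ≤ 1) :
    move x i j (x i + t) (x j - t) ∈ K lo hi := by
  obtain ⟨hcube, hsum, hlo, hhi⟩ := hx
  have hSb : ∀ b : Fin 3, Sb b (move x i j (x i + t) (x j - t)) =
      Sb b x + (if i ∈ pr b then t else 0) + (if j ∈ pr b then -t else 0) := by
    intro b
    rw [move_Sb x hij]
    congr 1
    · congr 1; split <;> ring
    · split <;> ring
  have key : ∀ b : Fin 3, (b ∈ lo → 1 ≤ Sb b (move x i j (x i + t) (x j - t))) ∧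
      (b ∈ hi → Sb b (move x i j (x i + t) (x j - t)) ≤ 1) := by
    intro b
    rw [hSb b]
    by_cases hib : i ∈ pr b <;> by_cases hjb : j ∈ pr b
    · -- both: same block, net change 0
      simp only [hib, hjb, if_pos]
      constructor
      · intro hb; have := hlo b hb; linarith
      · intro hb; have := hhi b hb; linarith
    · -- i only: b = blk i, and we are in the cross case
      have hbi : blk i = b := (mem_pr i b).1 hib
      rcases hcase with hsame | ⟨hpi, hpj, hxi0, hxi1, hxj0, hxj1⟩
      · exact absurd ((mem_pr j b).2 (hsame ▸ hbi)) hjb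
      · have hprb : pr b = {i, partner i} := by rw [← hbi]; exact (partner_facts i).2.2
        have hSbx : Sb b x = x i + x (partner i) := by
          rw [Sb, hprb, Finset.sum_pair (fun h => (partner_facts i).1 h.symm)]
        simp only [hib, if_pos, hjb, if_neg, not_false_iff]
        rcases hpi with hp0 | hp1
        · constructor
          · intro hb; have := hlo b hb; rw [hSbx, hp0] at this; linarith
          · intro hb; have := hhi b hb; rw [hSbx, hp0]; linarith
        · constructor
          · intro hb; rw [hSbx, hp1]; linarith
          · intro hb; have := hhi b hb; rw [hSbx, hp1] at this; linarith
    · -- j only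
      have hbj : blk j = b := (mem_pr j b).1 hjb
      rcases hcase with hsame | ⟨hpi, hpj, hxi0, hxi1, hxj0, hxj1⟩
      · exact absurd ((mem_pr i b).2 (hsame ▸ hbj)) hib
      · have hprb : pr b = {j, partner j} := by rw [← hbj]; exact (partner_facts j).2.2
        have hSbx : Sb b x = x j + x (partner j) := by
          rw [Sb, hprb, Finset.sum_pair (fun h => (partner_facts j).1 h.symm)]
        simp only [hjb, if_pos, hib, if_neg, not_false_iff]
        rcases hpj with hp0 | hp1
        · constructor
          · intro hb; have := hlo b hb; rw [hSbx, hp0] at this; linarith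
          · intro hb; rw [hSbx, hp0]; linarith
        · constructor
          · intro hb; rw [hSbx, hp1]; linarith
          · intro hb; have := hhi b hb; rw [hSbx, hp1] at this; linarith
    · -- neither
      simp only [hib, hjb, if_neg, not_false_iff]
      constructor
      · intro hb; have := hlo b hb; linarith
      · intro hb; have := hhi b hb; linarith
  refine ⟨fun l => ?_, ?_, fun b hb => (key b).1 hb, fun b hb => (key b).2 hb⟩
  · by_cases hl : l = i
    · subst hl; rw [move_apply_i x hij]; exact ⟨h1, h2⟩
    · by_cases hl' : l = j
      · subst hl'; rw [move_apply_j x hij]; exact ⟨h3, h4⟩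
      · rw [move_apply_other x hl hl']; exact hcube l
  · rw [move_sum x hij]; rw [hsum]; ring


open Classical in
noncomputable def fracSet (x : Fin 6 → ℝ) : Finset (Fin 6) :=
  Finset.univ.filter (fun i => ¬(x i = 0 ∨ x i = 1))

open Classical in
lemma mem_fracSet {x : Fin 6 → ℝ} {i : Fin 6} :
    i ∈ fracSet x ↔ ¬(x i = 0 ∨ x i = 1) := by
  simp [fracSet]

lemma fracSet_lt {x y : Fin 6 → ℝ}
    (hsub : ∀ l, ¬(y l = 0 ∨ y l = 1) → ¬(x l = 0 ∨ x l = 1))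
    {i : Fin 6} (hxi : ¬(x i = 0 ∨ x i = 1)) (hyi : y i = 0 ∨ y i = 1) :
    (fracSet y).card < (fracSet x).card := by
  apply Finset.card_lt_card
  rw [Finset.ssubset_iff_of_subset]
  · exact ⟨i, mem_fracSet.2 hxi, fun h => (mem_fracSet.1 h) hyi⟩
  · intro l hl
    exact mem_fracSet.2 (hsub l (mem_fracSet.1 hl))

lemma exists_other_frac (x : Fin 6 → ℝ) (hsum : ∑ i, x i = 3)
    (i : Fin 6) (h0 : 0 < x i) (h1 : x i < 1) :
    ∃ j, j ≠ i ∧ ¬(x j = 0 ∨ x j = 1) := by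
  classical
  by_contra hc
  push_neg at hc
  set T := (Finset.univ.erase i).filter (fun l => x l = 1) with hT
  have hsum' : ∑ l ∈ Finset.univ.erase i, x l = T.card := by
    rw [hT, ← Finset.sum_boole]
    refine Finset.sum_congr rfl (fun l hl => ?_)
    rcases hc l (Finset.ne_of_mem_erase hl) with h | h <;> simp [h]
  have hxi : x i + T.card = 3 := by
    rw [← hsum', Finset.add_sum_erase _ _ (Finset.mem_univ i), hsum]
  have h2 : (2 : ℝ) < T.card := by linarith
  have h3 : (T.card : ℝ) < 3 := by linarith
  have h2' : 2 < T.card := by exact_mod_cast h2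
  have h3' : T.card < 3 := by exact_mod_cast h3
  omega

lemma exists_combo (lo hi : Finset (Fin 3)) (x : Fin 6 → ℝ) (hx : x ∈ K lo hi)
    (h : ¬ ∀ i, x i = 0 ∨ x i = 1) :
    ∃ y z, y ∈ K lo hi ∧ z ∈ K lo hi ∧
      (fracSet y).card < (fracSet x).card ∧ (fracSet z).card < (fracSet x).card ∧
      ∃ a b : ℝ, 0 ≤ a ∧ 0 ≤ b ∧ a + b = 1 ∧ a • y + b • z = x := by
  have bd : ∀ l : Fin 6, ¬(x l = 0 ∨ x l = 1) → 0 < x l ∧ x l < 1 := by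
    intro l hl
    rw [not_or] at hl
    exact ⟨lt_of_le_of_ne (hx.1 l).1 (Ne.symm hl.1), lt_of_le_of_ne (hx.1 l).2 hl.2⟩
  obtain ⟨i, j, hij, hfi, hfj, hcase⟩ :
      ∃ i j : Fin 6, i ≠ j ∧ ¬(x i = 0 ∨ x i = 1) ∧ ¬(x j = 0 ∨ x j = 1) ∧
        (blk i = blk j ∨
          ((x (partner i) = 0 ∨ x (partner i) = 1) ∧ (x (partner j) = 0 ∨ x (partner j) = 1) ∧
            0 < x i ∧ x i < 1 ∧ 0 < x j ∧ x j < 1)) := by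
    push_neg at h
    obtain ⟨i0, hi00, hi01⟩ := h
    have hfi0 : ¬(x i0 = 0 ∨ x i0 = 1) := not_or.mpr ⟨hi00, hi01⟩
    by_cases hp : x (partner i0) = 0 ∨ x (partner i0) = 1
    · obtain ⟨i', hi'ne, hfi'⟩ :=
        exists_other_frac x hx.2.1 i0 (bd i0 hfi0).1 (bd i0 hfi0).2
      by_cases hp' : x (partner i') = 0 ∨ x (partner i') = 1
      · exact ⟨i0, i', Ne.symm hi'ne, hfi0, hfi',
          Or.inr ⟨hp, hp', (bd i0 hfi0).1, (bd i0 hfi0).2, (bd i' hfi').1, (bd i' hfi').2⟩⟩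
      · exact ⟨i', partner i', Ne.symm (partner_facts i').1, hfi', hp',
          Or.inl ((partner_facts i').2.1).symm⟩
    · exact ⟨i0, partner i0, Ne.symm (partner_facts i0).1, hfi0, hp,
        Or.inl ((partner_facts i0).2.1).symm⟩
  obtain ⟨hxi0, hxi1⟩ := bd i hfi
  obtain ⟨hxj0, hxj1⟩ := bd j hfj
  set a := min (1 - x i) (x j) with ha_def
  set b := min (x i) (1 - x j) with hb_def
  have ha : 0 < a := lt_min (by linarith) hxj0
  have hb : 0 < b := lt_min hxi0 (by linarith)
  have hal : a ≤ 1 - x i := min_le_left _ _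
  have har : a ≤ x j := min_le_right _ _
  have hbl : b ≤ x i := min_le_left _ _
  have hbr : b ≤ 1 - x j := min_le_right _ _
  set y := move x i j (x i + a) (x j - a) with hy
  set z := move x i j (x i + (-b)) (x j - (-b)) with hz
  have hyK : y ∈ K lo hi :=
    move_mem lo hi x hx i j hij hcase a (by linarith) (by linarith) (by linarith) (by linarith)
  have hzK : z ∈ K lo hi :=
    move_mem lo hi x hx i j hij hcase (-b) (by linarith) (by linarith) (by linarith) (by linarith)
  have hsuby : ∀ l, ¬(y l = 0 ∨ y l = 1) → ¬(x l = 0 ∨ x l = 1) := by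
    intro l hl
    by_cases h1 : l = i
    · subst h1; exact hfi
    by_cases h2 : l = j
    · subst h2; exact hfj
    rw [hy, move_apply_other x h1 h2] at hl; exact hl
  have hsubz : ∀ l, ¬(z l = 0 ∨ z l = 1) → ¬(x l = 0 ∨ x l = 1) := by
    intro l hl
    by_cases h1 : l = i
    · subst h1; exact hfi
    by_cases h2 : l = j
    · subst h2; exact hfj
    rw [hz, move_apply_other x h1 h2] at hl; exact hl
  have hylt : (fracSet y).card < (fracSet x).card := by
    rcases min_cases (1 - x i) (x j) with ⟨hmin, -⟩ | ⟨hmin, -⟩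
    · refine fracSet_lt hsuby hfi (Or.inr ?_)
      rw [hy, move_apply_i x hij, ha_def, hmin]; ring
    · refine fracSet_lt hsuby hfj (Or.inl ?_)
      rw [hy, move_apply_j x hij, ha_def, hmin]; ring
  have hzlt : (fracSet z).card < (fracSet x).card := by
    rcases min_cases (x i) (1 - x j) with ⟨hmin, -⟩ | ⟨hmin, -⟩
    · refine fracSet_lt hsubz hfi (Or.inl ?_)
      rw [hz, move_apply_i x hij, hb_def, hmin]; ring
    · refine fracSet_lt hsubz hfj (Or.inr ?_)
      rw [hz, move_apply_j x hij, hb_def, hmin]; ring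
  have hab : (0:ℝ) < a + b := by linarith
  refine ⟨y, z, hyK, hzK, hylt, hzlt, b/(a+b), a/(a+b), by positivity, by positivity, ?_, ?_⟩
  · field_simp; ring
  · funext l
    simp only [Pi.add_apply, Pi.smul_apply, smul_eq_mul]
    by_cases h1 : l = i
    · subst h1
      rw [hy, hz, move_apply_i x hij, move_apply_i x hij]
      field_simp; ring
    by_cases h2 : l = j
    · subst h2
      rw [hy, hz, move_apply_j x hij, move_apply_j x hij]
      field_simp; ring
    · rw [hy, hz, move_apply_other x h1 h2, move_apply_other x h1 h2]
      have h3 : b / (a + b) + a / (a + b) = 1 := by field_simp; ring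
      calc b / (a + b) * x l + a / (a + b) * x l = (b / (a + b) + a / (a + b)) * x l := by ring
        _ = x l := by rw [h3, one_mul]

lemma integral_mem_hull (lo hi : Finset (Fin 3)) (x : Fin 6 → ℝ) (hx : x ∈ K lo hi)
    (hint : ∀ i, x i = 0 ∨ x i = 1) :
    x ∈ convexHull ℝ (indVec 6 '' ↑(Verts lo hi)) := by
  classical
  have hxB : x = indVec 6 (Finset.univ.filter (fun i => x i = 1)) := by
    funext i
    rcases hint i with h | h <;> simp [indVec, h]
  rw [hxB]
  apply subset_convexHull
  refine Set.mem_image_of_mem _ ?_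
  rw [Finset.mem_coe, ← indVec_mem_K_iff]
  rw [← hxB]; exact hx

lemma coverage (lo hi : Finset (Fin 3)) : ∀ (N : ℕ) (x : Fin 6 → ℝ),
    (fracSet x).card ≤ N → x ∈ K lo hi →
    x ∈ convexHull ℝ (indVec 6 '' ↑(Verts lo hi)) := by
  intro N
  induction N with
  | zero =>
    intro x h0 hx
    refine integral_mem_hull lo hi x hx (fun i => ?_)
    by_contra hc
    have hmem : i ∈ fracSet x := mem_fracSet.2 hc
    have hemp : fracSet x = ∅ := Finset.card_eq_zero.1 (Nat.le_zero.1 h0)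
    exact absurd (hemp ▸ hmem) (Finset.notMem_empty i)
  | succ N ih =>
    intro x hN hx
    by_cases hint : ∀ i, x i = 0 ∨ x i = 1
    · exact integral_mem_hull lo hi x hx hint
    · obtain ⟨y, z, hyK, hzK, hylt, hzlt, a, b, ha, hb, hab, hcombo⟩ :=
        exists_combo lo hi x hx hint
      rw [← hcombo]
      exact (convex_convexHull ℝ _) (ih y (by omega) hyK) (ih z (by omega) hzK) ha hb hab

lemma polytope_verts (lo hi : Finset (Fin 3)) : polytope (Verts lo hi) = K lo hi := by
  apply subset_antisymm
  · apply convexHull_min _ (convex_K lo hi)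
    rintro - ⟨B, hB, rfl⟩
    exact (indVec_mem_K_iff lo hi B).2 hB
  · intro x hx; exact coverage lo hi _ x le_rfl hx

lemma verts_full : Verts ∅ ∅ = Finset.powersetCard 3 Finset.univ := by
  unfold Verts
  exact Finset.filter_true_of_mem fun B _ =>
    ⟨fun b hb => absurd hb (Finset.notMem_empty b), fun b hb => absurd hb (Finset.notMem_empty b)⟩

lemma schm1_eq : SchM1 = Verts {0} {2} := by
  ext B
  simp only [SchM1, Verts, Finset.mem_filter, Finset.mem_powersetCard]
  revert B
  decide

lemma schm2_eq : SchM2 = Verts {1} {0} := by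
  show SchM1.image _ = _
  rw [schm1_eq]
  decide

lemma schm3_eq : SchM3 = Verts {2} {1} := by
  show SchM2.image _ = _
  rw [schm2_eq]
  decide

set_option maxRecDepth 100000 in
lemma isBases_verts1 : IsBases (Verts {0} {2}) := by unfold IsBases; decide
set_option maxRecDepth 100000 in
lemma isBases_verts2 : IsBases (Verts {1} {0}) := by unfold IsBases; decide
set_option maxRecDepth 100000 in
lemma isBases_verts3 : IsBases (Verts {2} {1}) := by unfold IsBases; decide

lemma isBases_full : IsBases (Finset.powersetCard 3 (Finset.univ : Finset (Fin 6))) := by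
  intro B₁ h1 B₂ h2 b₁ hb₁
  rw [Finset.mem_powersetCard] at h1 h2
  have hne : (B₂ \ B₁).Nonempty := by
    rw [Finset.sdiff_nonempty]
    intro hsub
    have heq : B₂ = B₁ := Finset.eq_of_subset_of_card_le hsub (by omega)
    rw [Finset.mem_sdiff] at hb₁; exact hb₁.2 (heq ▸ hb₁.1)
  obtain ⟨b₂, hb₂⟩ := hne
  refine ⟨b₂, hb₂, ?_⟩
  rw [Finset.mem_sdiff] at hb₂ hb₁
  rw [Finset.mem_powersetCard]
  refine ⟨Finset.subset_univ _, ?_⟩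
  rw [Finset.card_insert_of_notMem (fun h => hb₂.2 (Finset.mem_of_mem_erase h)),
    Finset.card_erase_of_mem hb₁.1, h1.2]

lemma cube_extreme {s : Set (Fin 6 → ℝ)} (hs : ∀ y ∈ s, ∀ i, 0 ≤ y i ∧ y i ≤ 1)
    {x : Fin 6 → ℝ} (hx : x ∈ s) (h01 : ∀ i, x i = 0 ∨ x i = 1) :
    x ∈ Set.extremePoints ℝ s := by
  refine ⟨hx, fun y hy z hz hseg => ?_⟩
  obtain ⟨a, b, ha, hb, hab, hxy⟩ := hseg
  have key : ∀ i, y i = x i ∧ z i = x i := by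
    intro i
    have hxi : a * y i + b * z i = x i := by
      have := congrFun hxy i
      simpa [Pi.add_apply, Pi.smul_apply, smul_eq_mul] using this
    have hy0 := (hs y hy i).1; have hy1 := (hs y hy i).2
    have hz0 := (hs z hz i).1; have hz1 := (hs z hz i).2
    rcases h01 i with h | h <;> rw [h] at hxi ⊢ <;> constructor <;> nlinarith
  exact funext fun i => (key i).1

noncomputable def cproj (i : Fin 6) : (Fin 6 → ℝ) →L[ℝ] ℝ :=
  ContinuousLinearMap.proj (R := ℝ) (φ := fun _ : Fin 6 => ℝ) i

noncomputable def lS : Fin 3 → ((Fin 6 → ℝ) →L[ℝ] ℝ) :=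
  ![cproj 0 + cproj 1, cproj 2 + cproj 3, cproj 4 + cproj 5]

lemma lS_apply (b : Fin 3) (x : Fin 6 → ℝ) : lS b x = Sb b x := by
  fin_cases b <;>
    simp [lS, cproj, Sb0_eq, Sb1_eq, Sb2_eq, ContinuousLinearMap.add_apply,
      ContinuousLinearMap.proj_apply]

lemma exposed_le (A : Set (Fin 6 → ℝ)) (b : Fin 3)
    (hub : ∀ x ∈ A, Sb b x ≤ 1) (w₀ : Fin 6 → ℝ) (hw₀ : w₀ ∈ A) (hw₀b : Sb b w₀ = 1) :
    IsExposed ℝ A {x ∈ A | Sb b x = 1} := by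
  intro _
  refine ⟨lS b, ?_⟩
  ext x
  simp only [Set.mem_sep_iff, Set.mem_setOf_eq]
  constructor
  · rintro ⟨hxA, hxb⟩
    exact ⟨hxA, fun y hy => by rw [lS_apply, lS_apply, hxb]; exact hub y hy⟩
  · rintro ⟨hxA, hmax⟩
    refine ⟨hxA, le_antisymm (hub x hxA) ?_⟩
    have := hmax w₀ hw₀
    rwa [lS_apply, lS_apply, hw₀b] at this

lemma exposed_ge (A : Set (Fin 6 → ℝ)) (b : Fin 3)
    (hlb : ∀ x ∈ A, 1 ≤ Sb b x) (w₀ : Fin 6 → ℝ) (hw₀ : w₀ ∈ A) (hw₀b : Sb b w₀ = 1) :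
    IsExposed ℝ A {x ∈ A | Sb b x = 1} := by
  intro _
  refine ⟨-lS b, ?_⟩
  ext x
  simp only [Set.mem_sep_iff, Set.mem_setOf_eq]
  constructor
  · rintro ⟨hxA, hxb⟩
    refine ⟨hxA, fun y hy => ?_⟩
    simp only [ContinuousLinearMap.neg_apply]
    rw [lS_apply, lS_apply, hxb]
    have := hlb y hy; linarith
  · rintro ⟨hxA, hmax⟩
    refine ⟨hxA, le_antisymm ?_ (hlb x hxA)⟩
    have := hmax w₀ hw₀
    simp only [ContinuousLinearMap.neg_apply] at this
    rw [lS_apply, lS_apply, hw₀b] at this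
    linarith

-- three K sets
local notation "P₁" => K {0} {2}
local notation "P₂" => K {1} {0}
local notation "P₃" => K {2} {1}

lemma memK_singleton {x : Fin 6 → ℝ} (hcube : ∀ i, 0 ≤ x i ∧ x i ≤ 1) (hsum : (∑ i, x i) = 3)
    (p q : Fin 3) (h1 : 1 ≤ Sb p x) (h2 : Sb q x ≤ 1) : x ∈ K {p} {q} :=
  ⟨hcube, hsum, fun b hb => by rw [Finset.mem_singleton] at hb; exact hb ▸ h1,
    fun b hb => by rw [Finset.mem_singleton] at hb; exact hb ▸ h2⟩

lemma K_lo {x : Fin 6 → ℝ} {p q : Fin 3} (hx : x ∈ K {p} {q}) : 1 ≤ Sb p x :=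
  hx.2.2.1 p (Finset.mem_singleton_self p)
lemma K_hi {x : Fin 6 → ℝ} {p q : Fin 3} (hx : x ∈ K {p} {q}) : Sb q x ≤ 1 :=
  hx.2.2.2 q (Finset.mem_singleton_self q)
lemma K_sb3 {lo hi : Finset (Fin 3)} {x : Fin 6 → ℝ} (hx : x ∈ K lo hi) :
    Sb 0 x + Sb 1 x + Sb 2 x = 3 := by rw [← sum_sb]; exact hx.2.1

-- witness points
noncomputable def w : Fin 6 → ℝ := indVec 6 {0, 2, 4}
lemma w_mem1 : w ∈ P₁ := (indVec_mem_K_iff _ _ _).2 (by decide)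
lemma w_mem2 : w ∈ P₂ := (indVec_mem_K_iff _ _ _).2 (by decide)
lemma w_mem3 : w ∈ P₃ := (indVec_mem_K_iff _ _ _).2 (by decide)
lemma w_sb : ∀ b : Fin 3, Sb b w = 1 := by
  intro b
  rw [w, Sb_indVec]
  have : ∀ b : Fin 3, (pr b ∩ ({0,2,4} : Finset (Fin 6))).card = 1 := by decide
  rw [this b]; norm_num

noncomputable def vA : Fin 6 → ℝ := indVec 6 {0, 1, 2}
noncomputable def vB : Fin 6 → ℝ := indVec 6 {2, 3, 4}
noncomputable def vC : Fin 6 → ℝ := indVec 6 {0, 4, 5}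
lemma vA_mem : vA ∈ P₁ := (indVec_mem_K_iff _ _ _).2 (by decide)
lemma vB_mem : vB ∈ P₂ := (indVec_mem_K_iff _ _ _).2 (by decide)
lemma vC_mem : vC ∈ P₃ := (indVec_mem_K_iff _ _ _).2 (by decide)
lemma vA_sb0 : Sb 0 vA = 2 := by
  rw [vA, Sb_indVec, show (pr 0 ∩ ({0,1,2} : Finset (Fin 6))).card = 2 by decide]; norm_num
lemma vA_sb2 : Sb 2 vA = 0 := by
  rw [vA, Sb_indVec, show (pr 2 ∩ ({0,1,2} : Finset (Fin 6))).card = 0 by decide]; norm_num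
lemma vB_sb1 : Sb 1 vB = 2 := by
  rw [vB, Sb_indVec, show (pr 1 ∩ ({2,3,4} : Finset (Fin 6))).card = 2 by decide]; norm_num
lemma vB_sb0 : Sb 0 vB = 0 := by
  rw [vB, Sb_indVec, show (pr 0 ∩ ({2,3,4} : Finset (Fin 6))).card = 0 by decide]; norm_num
lemma vC_sb2 : Sb 2 vC = 2 := by
  rw [vC, Sb_indVec, show (pr 2 ∩ ({0,4,5} : Finset (Fin 6))).card = 2 by decide]; norm_num
lemma vC_sb1 : Sb 1 vC = 0 := by
  rw [vC, Sb_indVec, show (pr 1 ∩ ({0,4,5} : Finset (Fin 6))).card = 0 by decide]; norm_num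

-- face identities
lemma face12 : P₁ ∩ P₂ = {x ∈ P₁ | Sb 0 x = 1} := by
  ext x
  constructor
  · rintro ⟨hA, hB⟩
    exact ⟨hA, le_antisymm (K_hi hB) (K_lo hA)⟩
  · rintro ⟨hA, hx0⟩
    refine ⟨hA, memK_singleton hA.1 hA.2.1 1 0 ?_ hx0.le⟩
    have h3 := K_sb3 hA; have h2 := K_hi hA; linarith
lemma face12' : P₁ ∩ P₂ = {x ∈ P₂ | Sb 0 x = 1} := by
  rw [face12]
  ext x
  constructor
  · rintro ⟨hA, hx0⟩
    refine ⟨memK_singleton hA.1 hA.2.1 1 0 ?_ hx0.le, hx0⟩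
    have h3 := K_sb3 hA; have h2 := K_hi hA; linarith
  · rintro ⟨hB, hx0⟩
    refine ⟨memK_singleton hB.1 hB.2.1 0 2 hx0.ge ?_, hx0⟩
    have h3 := K_sb3 hB; have h1 := K_lo hB; linarith
lemma face23 : P₂ ∩ P₃ = {x ∈ P₂ | Sb 1 x = 1} := by
  ext x
  constructor
  · rintro ⟨hA, hB⟩
    exact ⟨hA, le_antisymm (K_hi hB) (K_lo hA)⟩
  · rintro ⟨hA, hx0⟩
    refine ⟨hA, memK_singleton hA.1 hA.2.1 2 1 ?_ hx0.le⟩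
    have h3 := K_sb3 hA; have h2 := K_hi hA; linarith
lemma face23' : P₂ ∩ P₃ = {x ∈ P₃ | Sb 1 x = 1} := by
  rw [face23]
  ext x
  constructor
  · rintro ⟨hA, hx0⟩
    refine ⟨memK_singleton hA.1 hA.2.1 2 1 ?_ hx0.le, hx0⟩
    have h3 := K_sb3 hA; have h2 := K_hi hA; linarith
  · rintro ⟨hB, hx0⟩
    refine ⟨memK_singleton hB.1 hB.2.1 1 0 hx0.ge ?_, hx0⟩
    have h3 := K_sb3 hB; have h1 := K_lo hB; linarith
lemma face13 : P₁ ∩ P₃ = {x ∈ P₁ | Sb 2 x = 1} := by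
  ext x
  constructor
  · rintro ⟨hA, hB⟩
    exact ⟨hA, le_antisymm (K_hi hA) (K_lo hB)⟩
  · rintro ⟨hA, hx0⟩
    refine ⟨hA, memK_singleton hA.1 hA.2.1 2 1 hx0.ge ?_⟩
    have h3 := K_sb3 hA; have h1 := K_lo hA; linarith
lemma face13' : P₁ ∩ P₃ = {x ∈ P₃ | Sb 2 x = 1} := by
  rw [face13]
  ext x
  constructor
  · rintro ⟨hA, hx0⟩
    refine ⟨memK_singleton hA.1 hA.2.1 2 1 hx0.ge ?_, hx0⟩
    have h3 := K_sb3 hA; have h1 := K_lo hA; linarith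
  · rintro ⟨hB, hx0⟩
    refine ⟨memK_singleton hB.1 hB.2.1 0 2 ?_ hx0.le, hx0⟩
    have h3 := K_sb3 hB; have h1 := K_hi hB; linarith

lemma pair12 : IsExposed ℝ P₁ (P₁ ∩ P₂) ∧ IsExposed ℝ P₂ (P₁ ∩ P₂) ∧
    P₁ ∩ P₂ ≠ P₁ ∧ P₁ ∩ P₂ ≠ P₂ := by
  refine ⟨by rw [face12]; exact exposed_ge P₁ 0 (fun x hx => K_lo hx) w w_mem1 (w_sb 0),
    by rw [face12']; exact exposed_le P₂ 0 (fun x hx => K_hi hx) w w_mem2 (w_sb 0), ?_, ?_⟩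
  · intro h
    have hvA : vA ∈ P₁ ∩ P₂ := h.symm ▸ vA_mem
    have := K_hi hvA.2
    rw [vA_sb0] at this; norm_num at this
  · intro h
    have hvB : vB ∈ P₁ ∩ P₂ := h.symm ▸ vB_mem
    have := K_lo hvB.1
    rw [vB_sb0] at this; norm_num at this

lemma pair23 : IsExposed ℝ P₂ (P₂ ∩ P₃) ∧ IsExposed ℝ P₃ (P₂ ∩ P₃) ∧
    P₂ ∩ P₃ ≠ P₂ ∧ P₂ ∩ P₃ ≠ P₃ := by
  refine ⟨by rw [face23]; exact exposed_ge P₂ 1 (fun x hx => K_lo hx) w w_mem2 (w_sb 1),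
    by rw [face23']; exact exposed_le P₃ 1 (fun x hx => K_hi hx) w w_mem3 (w_sb 1), ?_, ?_⟩
  · intro h
    have hvB : vB ∈ P₂ ∩ P₃ := h.symm ▸ vB_mem
    have := K_hi hvB.2
    rw [vB_sb1] at this; norm_num at this
  · intro h
    have hvC : vC ∈ P₂ ∩ P₃ := h.symm ▸ vC_mem
    have := K_lo hvC.1
    rw [vC_sb1] at this; norm_num at this

lemma pair13 : IsExposed ℝ P₁ (P₁ ∩ P₃) ∧ IsExposed ℝ P₃ (P₁ ∩ P₃) ∧
    P₁ ∩ P₃ ≠ P₁ ∧ P₁ ∩ P₃ ≠ P₃ := by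
  refine ⟨by rw [face13]; exact exposed_le P₁ 2 (fun x hx => K_hi hx) w w_mem1 (w_sb 2),
    by rw [face13']; exact exposed_ge P₃ 2 (fun x hx => K_lo hx) w w_mem3 (w_sb 2), ?_, ?_⟩
  · intro h
    have hvA : vA ∈ P₁ ∩ P₃ := h.symm ▸ vA_mem
    have := K_lo hvA.2
    rw [vA_sb2] at this; norm_num at this
  · intro h
    have hvC : vC ∈ P₁ ∩ P₃ := h.symm ▸ vC_mem
    have := K_hi hvC.1
    rw [vC_sb2] at this; norm_num at this

end Sub36

open Sub36 in
theorem statement_5 :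
    IsMatroidSubdivision (Finset.powersetCard 3 (Finset.univ : Finset (Fin 6)))
      ![SchM1, SchM2, SchM3] := by
  have hQ : polytope (Finset.powersetCard 3 (Finset.univ : Finset (Fin 6))) = K ∅ ∅ := by
    rw [← verts_full]; exact polytope_verts _ _
  have hQ1 : polytope SchM1 = K {0} {2} := by rw [schm1_eq]; exact polytope_verts _ _
  have hQ2 : polytope SchM2 = K {1} {0} := by rw [schm2_eq]; exact polytope_verts _ _
  have hQ3 : polytope SchM3 = K {2} {1} := by rw [schm3_eq]; exact polytope_verts _ _
  have hM : ∀ i : Fin 3, polytope (![SchM1, SchM2, SchM3] i) =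
      ![K {0} {2}, K {1} {0}, K {2} {1}] i := by
    intro i
    fin_cases i
    · exact hQ1
    · exact hQ2
    · exact hQ3
  refine ⟨isBases_full, ?_, ?_, ?_, ?_⟩
  · intro i
    fin_cases i
    · show IsBases SchM1; rw [schm1_eq]; exact isBases_verts1
    · show IsBases SchM2; rw [schm2_eq]; exact isBases_verts2
    · show IsBases SchM3; rw [schm3_eq]; exact isBases_verts3
  · -- union
    rw [hQ]
    simp only [hM]
    ext x
    simp only [Set.mem_iUnion]
    constructor
    · rintro ⟨i, hi⟩
      fin_cases i
      · exact ⟨hi.1, hi.2.1, by simp, by simp⟩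
      · exact ⟨hi.1, hi.2.1, by simp, by simp⟩
      · exact ⟨hi.1, hi.2.1, by simp, by simp⟩
    · rintro ⟨hcube, hsum, -, -⟩
      have h3 : Sb 0 x + Sb 1 x + Sb 2 x = 3 := by rw [← sum_sb]; exact hsum
      rcases le_or_gt (Sb 2 x) 1 with h2 | h2
      · rcases le_or_gt 1 (Sb 0 x) with h0 | h0
        · exact ⟨0, memK_singleton hcube hsum 0 2 h0 h2⟩
        · exact ⟨1, memK_singleton hcube hsum 1 0 (by linarith) (by linarith)⟩
      · rcases le_or_gt (Sb 1 x) 1 with h1 | h1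
        · exact ⟨2, memK_singleton hcube hsum 2 1 (by linarith) h1⟩
        · exact ⟨1, memK_singleton hcube hsum 1 0 (by linarith) (by linarith)⟩
  · -- extreme points
    have cond2 : ∀ (V : Finset (Finset (Fin 6))) (lo hi : Finset (Fin 3)), V = Verts lo hi →
        Set.extremePoints ℝ (polytope V) ⊆
        Set.extremePoints ℝ (polytope (Finset.powersetCard 3 (Finset.univ : Finset (Fin 6)))) := by
      intro V lo hi hV y hy
      subst hV
      have hyv : y ∈ indVec 6 '' ↑(Verts lo hi) := extremePoints_convexHull_subset hy
      obtain ⟨B, hB, rfl⟩ := hyv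
      rw [Finset.mem_coe, Verts, Finset.mem_filter] at hB
      rw [hQ]
      refine cube_extreme (fun z hz => hz.1) ?_ ?_
      · refine (indVec_mem_K_iff ∅ ∅ B).2 ?_
        rw [Verts, Finset.mem_filter]
        exact ⟨hB.1, by simp, by simp⟩
      · intro i; unfold indVec; split <;> simp
    intro i
    fin_cases i
    · exact cond2 SchM1 {0} {2} schm1_eq
    · exact cond2 SchM2 {1} {0} schm2_eq
    · exact cond2 SchM3 {2} {1} schm3_eq
  · -- pairwise faces
    intro i j hij
    simp only [hM]
    fin_cases i <;> fin_cases j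
    · exact absurd rfl hij
    · exact pair12
    · exact pair13
    · exact ⟨by rw [Set.inter_comm]; exact pair12.2.1, by rw [Set.inter_comm]; exact pair12.1,
        by rw [Set.inter_comm]; exact pair12.2.2.2, by rw [Set.inter_comm]; exact pair12.2.2.1⟩
    · exact absurd rfl hij
    · exact pair23
    · exact ⟨by rw [Set.inter_comm]; exact pair13.2.1, by rw [Set.inter_comm]; exact pair13.1,
        by rw [Set.inter_comm]; exact pair13.2.2.2, by rw [Set.inter_comm]; exact pair13.2.2.1⟩
    · exact ⟨by rw [Set.inter_comm]; exact pair23.2.1, by rw [Set.inter_comm]; exact pair23.1,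
        by rw [Set.inter_comm]; exact pair23.2.2.2, by rw [Set.inter_comm]; exact pair23.2.2.1⟩
    · exact absurd rfl hij
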